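/- arXiv:2307.02370 — 7 statements merged into one kernel-verified Lean document; each statement's English description precedes it below -/
import Mathlib

section
/- The balanced quasi-shuffle product ∗_b on ℚ⟨B⟩ is associative. -/
/-- The balanced quasi-shuffle product of two words. -/
noncomputable def bqs : List ℕ → List ℕ → (List ℕ →₀ ℚ)
  | [], w => Finsupp.single w 1
  | u@(_ :: _), [] => Finsupp.single u 1
  | i :: u, j :: v =>
      (bqs u (j :: v)).mapDomain (i :: ·) + (bqs (i :: u) v).mapDomain (j :: ·) +
        (if 1 ≤ i ∧ 1 ≤ j then (bqs u v).mapDomain ((i + j) :: ·) else 0)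
  termination_by u v => u.length + v.length

/-- The bilinear extension of the balanced quasi-shuffle product to all of `ℚ⟨B⟩`. -/
noncomputable def bqsL (f g : List ℕ →₀ ℚ) : List ℕ →₀ ℚ :=
  f.sum fun u a => g.sum fun v b => (a * b) • bqs u v

lemma bqs_nil_left (w : List ℕ) : bqs [] w = Finsupp.single w 1 := by simp [bqs]
lemma bqs_nil_right (u : List ℕ) : bqs u [] = Finsupp.single u 1 := by cases u <;> simp [bqs]

lemma bqs_cons_cons (i j : ℕ) (u v : List ℕ) :
    bqs (i :: u) (j :: v) =
      (bqs u (j :: v)).mapDomain (i :: ·) + (bqs (i :: u) v).mapDomain (j :: ·) +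
        (if 1 ≤ i ∧ 1 ≤ j then (bqs u v).mapDomain ((i + j) :: ·) else 0) := by
  rw [bqs]

lemma bqsL_zero_left (g : List ℕ →₀ ℚ) : bqsL 0 g = 0 := by simp [bqsL]
lemma bqsL_zero_right (f : List ℕ →₀ ℚ) : bqsL f 0 = 0 := by simp [bqsL]

lemma bqsL_add_left (f f' g : List ℕ →₀ ℚ) : bqsL (f + f') g = bqsL f g + bqsL f' g := by
  rw [bqsL, Finsupp.sum_add_index'] <;> simp [add_mul, add_smul, Finsupp.sum_add, bqsL]

lemma bqsL_add_right (f g g' : List ℕ →₀ ℚ) : bqsL f (g + g') = bqsL f g + bqsL f g' := by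
  rw [bqsL, bqsL, bqsL, ← Finsupp.sum_add]
  refine Finsupp.sum_congr fun u _ => ?_
  rw [Finsupp.sum_add_index'] <;> simp [mul_add, add_smul]

lemma bqsL_single_left (u : List ℕ) (c : ℚ) (g : List ℕ →₀ ℚ) :
    bqsL (Finsupp.single u c) g = g.sum fun v b => (c * b) • bqs u v := by
  rw [bqsL, Finsupp.sum_single_index]; simp

lemma bqsL_single_single (u v : List ℕ) (a b : ℚ) :
    bqsL (Finsupp.single u a) (Finsupp.single v b) = (a * b) • bqs u v := by
  rw [bqsL_single_left, Finsupp.sum_single_index] <;> simp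

lemma bqsL_single_right (f : List ℕ →₀ ℚ) (v : List ℕ) (c : ℚ) :
    bqsL f (Finsupp.single v c) = f.sum fun u a => (a * c) • bqs u v := by
  refine Finsupp.sum_congr fun u _ => ?_
  rw [Finsupp.sum_single_index]; simp

lemma bqsL_nil_left (g : List ℕ →₀ ℚ) : bqsL (Finsupp.single [] (1:ℚ)) g = g := by
  rw [bqsL_single_left]
  conv_rhs => rw [← g.sum_single]
  refine Finsupp.sum_congr fun v _ => ?_
  simp [bqs_nil_left, Finsupp.smul_single]

lemma bqsL_nil_right (f : List ℕ →₀ ℚ) : bqsL f (Finsupp.single [] (1:ℚ)) = f := by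
  rw [bqsL_single_right]
  conv_rhs => rw [← f.sum_single]
  refine Finsupp.sum_congr fun u _ => ?_
  simp [bqs_nil_right, Finsupp.smul_single]

lemma bqsL_ite_left (p : Prop) [Decidable p] (x g : List ℕ →₀ ℚ) :
    bqsL (if p then x else 0) g = if p then bqsL x g else 0 := by
  split <;> simp [bqsL_zero_left]

lemma bqsL_ite_right (p : Prop) [Decidable p] (f x : List ℕ →₀ ℚ) :
    bqsL f (if p then x else 0) = if p then bqsL f x else 0 := by
  split <;> simp [bqsL_zero_right]

lemma mapDomain_ite (p : Prop) [Decidable p] (m : List ℕ → List ℕ) (x : List ℕ →₀ ℚ) :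
    Finsupp.mapDomain m (if p then x else 0) = if p then x.mapDomain m else 0 := by
  split <;> simp

lemma ite_add_zero' (p : Prop) [Decidable p] (a b : List ℕ →₀ ℚ) :
    (if p then a + b else 0) = (if p then a else 0) + (if p then b else 0) := by
  split <;> simp

lemma ite_ite_zero (p q : Prop) [Decidable p] [Decidable q] (a : List ℕ →₀ ℚ) :
    (if p then (if q then a else 0) else 0) = if p ∧ q then a else 0 := by
  split_ifs <;> tauto

lemma bqsL_mapDomain_cons_single (a k : ℕ) (w : List ℕ) (x : List ℕ →₀ ℚ) :
    bqsL (x.mapDomain (a :: ·)) (Finsupp.single (k :: w) 1)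
      = (bqsL x (Finsupp.single (k :: w) 1)).mapDomain (a :: ·)
        + (bqsL (x.mapDomain (a :: ·)) (Finsupp.single w 1)).mapDomain (k :: ·)
        + (if 1 ≤ a ∧ 1 ≤ k then (bqsL x (Finsupp.single w 1)).mapDomain ((a + k) :: ·) else 0) := by
  induction x using Finsupp.induction_linear with
  | zero => simp [bqsL_zero_left]
  | add f g hf hg =>
      simp only [Finsupp.mapDomain_add, bqsL_add_left, hf, hg]
      split_ifs <;> abel
  | single t c =>
      simp only [Finsupp.mapDomain_single, bqsL_single_single, mul_one]
      rw [bqs_cons_cons]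
      simp only [smul_add, Finsupp.mapDomain_smul, smul_ite, smul_zero]

lemma bqsL_single_cons_mapDomain (i c : ℕ) (u : List ℕ) (y : List ℕ →₀ ℚ) :
    bqsL (Finsupp.single (i :: u) 1) (y.mapDomain (c :: ·))
      = (bqsL (Finsupp.single u 1) (y.mapDomain (c :: ·))).mapDomain (i :: ·)
        + (bqsL (Finsupp.single (i :: u) 1) y).mapDomain (c :: ·)
        + (if 1 ≤ i ∧ 1 ≤ c then (bqsL (Finsupp.single u 1) y).mapDomain ((i + c) :: ·) else 0) := by
  induction y using Finsupp.induction_linear with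
  | zero => simp [bqsL_zero_right]
  | add f g hf hg =>
      simp only [Finsupp.mapDomain_add, bqsL_add_right, hf, hg]
      split_ifs <;> abel
  | single t b =>
      simp only [Finsupp.mapDomain_single, bqsL_single_single, one_mul]
      rw [bqs_cons_cons]
      simp only [smul_add, Finsupp.mapDomain_smul, smul_ite, smul_zero]

set_option maxHeartbeats 2000000 in
lemma assocW : ∀ N u v w, u.length + v.length + w.length ≤ N →
    bqsL (bqs u v) (Finsupp.single w 1) = bqsL (Finsupp.single u 1) (bqs v w) := by
  intro N
  induction N with
  | zero =>
      intro u v w hN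
      obtain rfl : u = [] := List.length_eq_zero_iff.mp (by omega)
      obtain rfl : v = [] := List.length_eq_zero_iff.mp (by omega)
      simp [bqs_nil_left, bqsL_nil_left, bqsL_single_single]
  | succ N IH =>
      intro u v w hN
      match u, v, w with
      | [], v, w => simp [bqs_nil_left, bqsL_nil_left, bqsL_single_single]
      | i :: u', [], w => simp [bqs_nil_right, bqs_nil_left]
      | i :: u', j :: v', [] =>
          simp [bqs_nil_right, bqsL_nil_right, bqsL_single_single]
      | i :: u', j :: v', k :: w' =>
          simp only [List.length_cons] at hN
          have IH1 := IH u' (j::v') (k::w') (by simp only [List.length_cons]; omega)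
          have IH2 := IH (i::u') v' (k::w') (by simp only [List.length_cons]; omega)
          have IH3 := IH (i::u') (j::v') w' (by simp only [List.length_cons]; omega)
          have IH4 := IH u' v' (k::w') (by simp only [List.length_cons]; omega)
          have IH5 := IH u' (j::v') w' (by simp only [List.length_cons]; omega)
          have IH6 := IH (i::u') v' w' (by simp only [List.length_cons]; omega)
          have IH7 := IH u' v' w' (by omega)
          rw [bqs_cons_cons i j, bqs_cons_cons j k]
          simp only [bqsL_add_left, bqsL_add_right, bqsL_ite_left, bqsL_ite_right]
          rw [bqsL_mapDomain_cons_single i k w' (bqs u' (j::v')),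
              bqsL_mapDomain_cons_single j k w' (bqs (i::u') v'),
              bqsL_mapDomain_cons_single (i+j) k w' (bqs u' v'),
              bqsL_single_cons_mapDomain i j u' (bqs v' (k::w')),
              bqsL_single_cons_mapDomain i k u' (bqs (j::v') w'),
              bqsL_single_cons_mapDomain i (j+k) u' (bqs v' w')]
          rw [IH1, IH2, IH4, IH5, IH6, IH7, ← IH3]
          rw [bqs_cons_cons j k, bqs_cons_cons i j]
          simp only [bqsL_add_left, bqsL_add_right, bqsL_ite_left, bqsL_ite_right,
            Finsupp.mapDomain_add, mapDomain_ite, ite_add_zero', ite_ite_zero]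
          have e1 : ((1 ≤ i ∧ 1 ≤ j) ∧ 1 ≤ i + j ∧ 1 ≤ k) ↔ ((1 ≤ j ∧ 1 ≤ k) ∧ 1 ≤ i ∧ 1 ≤ j + k) := by omega
          have e2 : i + j + k = i + (j + k) := by omega
          rw [e2] at *
          simp only [e1]
          abel

lemma bqsL_smul_left (c : ℚ) (f g : List ℕ →₀ ℚ) : bqsL (c • f) g = c • bqsL f g := by
  rw [bqsL, bqsL, Finsupp.smul_sum, Finsupp.sum_smul_index' (by simp)]
  refine Finsupp.sum_congr fun u _ => ?_
  rw [Finsupp.smul_sum]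
  refine Finsupp.sum_congr fun v _ => ?_
  simp [smul_eq_mul, mul_assoc, mul_smul]

lemma bqsL_smul_right (c : ℚ) (f g : List ℕ →₀ ℚ) : bqsL f (c • g) = c • bqsL f g := by
  rw [bqsL, bqsL, Finsupp.smul_sum]
  refine Finsupp.sum_congr fun u _ => ?_
  rw [Finsupp.smul_sum, Finsupp.sum_smul_index' (by simp)]
  refine Finsupp.sum_congr fun v _ => ?_
  simp [smul_eq_mul, mul_left_comm, mul_smul]


/-- The balanced quasi-shuffle product on `ℚ⟨B⟩` is associative. -/
theorem stmt_5 (f g h : List ℕ →₀ ℚ) : bqsL (bqsL f g) h = bqsL f (bqsL g h) := by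
  induction f using Finsupp.induction_linear with
  | zero => simp [bqsL_zero_left]
  | add f f' hf hf' => simp [bqsL_add_left, hf, hf']
  | single u a =>
    induction g using Finsupp.induction_linear with
    | zero => simp [bqsL_zero_left, bqsL_zero_right]
    | add g g' hg hg' => simp [bqsL_add_left, bqsL_add_right, hg, hg']
    | single v b =>
      induction h using Finsupp.induction_linear with
      | zero => simp [bqsL_zero_right]
      | add h h' hh hh' => simp [bqsL_add_right, hh, hh']
      | single w c =>
        have h1 : Finsupp.single u a = a • Finsupp.single u (1:ℚ) := by
          simp [Finsupp.smul_single]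
        have h2 : Finsupp.single v b = b • Finsupp.single v (1:ℚ) := by
          simp [Finsupp.smul_single]
        have h3 : Finsupp.single w c = c • Finsupp.single w (1:ℚ) := by
          simp [Finsupp.smul_single]
        rw [h1, h2, h3]
        simp only [bqsL_smul_left, bqsL_smul_right]
        simp only [bqsL_single_single, one_mul, one_smul]
        rw [assocW (u.length + v.length + w.length) u v w le_rfl]
end

section
/- Under the duality pairing (Φ | w) = coefficient of the word w in the noncommutative power series Φ, the coproduct Δ_b with Δ_b(b_i) = 1 ⊗ b_i + b_i ⊗ 1 + ∑_{j=1}^{i-1} b_j ⊗ b_{i-j}, extended multiplicatively with respect to concatenation, satisfies (Δ_b(Φ) | u ⊗ v) = (Φ | u ∗_b v) for all power series Φ and all words u, v. -/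
/-- Concatenation product on `ℚ⟨B⟩ ⊗ ℚ⟨B⟩`, with tensors of words modeled as pairs. -/
noncomputable def cmul (f g : (List ℕ × List ℕ) →₀ ℚ) : (List ℕ × List ℕ) →₀ ℚ :=
  f.sum fun p a => g.sum fun q b =>
    (a * b) • Finsupp.single (p.1 ++ q.1, p.2 ++ q.2) 1

/-- `Δ_b(b_i) = 1 ⊗ b_i + b_i ⊗ 1 + ∑_{j=1}^{i-1} b_j ⊗ b_{i-j}`. -/
noncomputable def deltabLetter (i : ℕ) : (List ℕ × List ℕ) →₀ ℚ :=
  Finsupp.single ([], [i]) 1 + Finsupp.single ([i], []) 1 +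
    ∑ j ∈ Finset.Ico 1 i, Finsupp.single ([j], [i - j]) 1

/-- `Δ_b` on a word, extended multiplicatively with respect to concatenation. -/
noncomputable def deltab (w : List ℕ) : (List ℕ × List ℕ) →₀ ℚ :=
  (w.map deltabLetter).foldr cmul (Finsupp.single ([], []) 1)

lemma cmul_add_left (f1 f2 g : (List ℕ × List ℕ) →₀ ℚ) :
    cmul (f1 + f2) g = cmul f1 g + cmul f2 g := by
  unfold cmul
  apply Finsupp.sum_add_index'
  · intro p; simp
  · intro p a1 a2
    rw [← Finsupp.sum_add]
    apply Finsupp.sum_congr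
    intro q _
    simp [add_mul, add_smul]

lemma cmul_single_left (x y : List ℕ) (a : ℚ) (g : (List ℕ × List ℕ) →₀ ℚ) :
    cmul (Finsupp.single (x, y) a) g =
      a • Finsupp.mapDomain (fun q : List ℕ × List ℕ => (x ++ q.1, y ++ q.2)) g := by
  unfold cmul
  rw [Finsupp.sum_single_index (by simp)]
  rw [Finsupp.mapDomain, Finsupp.smul_sum]
  apply Finsupp.sum_congr
  intro q _
  simp [Finsupp.smul_single, smul_eq_mul, mul_comm]

lemma cmul_sum_left {ι : Type*} (s : Finset ι) (f : ι → (List ℕ × List ℕ) →₀ ℚ)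
    (g : (List ℕ × List ℕ) →₀ ℚ) :
    cmul (∑ j ∈ s, f j) g = ∑ j ∈ s, cmul (f j) g := by
  classical
  induction s using Finset.induction with
  | empty => simp [cmul]
  | insert _ _ h ih => rw [Finset.sum_insert h, cmul_add_left, ih, Finset.sum_insert h]

lemma deltab_cons (i : ℕ) (w : List ℕ) :
    deltab (i :: w) =
      Finsupp.mapDomain (fun q : List ℕ × List ℕ => (q.1, i :: q.2)) (deltab w) +
      Finsupp.mapDomain (fun q : List ℕ × List ℕ => (i :: q.1, q.2)) (deltab w) +
      ∑ j ∈ Finset.Ico 1 i,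
        Finsupp.mapDomain (fun q : List ℕ × List ℕ => (j :: q.1, (i - j) :: q.2)) (deltab w) := by
  show cmul (deltabLetter i) (deltab w) = _
  rw [deltabLetter, cmul_add_left, cmul_add_left, cmul_sum_left]
  simp only [cmul_single_left, one_smul, List.nil_append]
  rfl

lemma mapR_nil (i : ℕ) (D : (List ℕ × List ℕ) →₀ ℚ) (u : List ℕ) :
    Finsupp.mapDomain (fun q : List ℕ × List ℕ => (q.1, i :: q.2)) D (u, []) = 0 :=
  Finsupp.mapDomain_notin_range _ _ (by rintro ⟨q, h⟩; simp [Prod.ext_iff] at h)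

lemma mapR_cons (i k : ℕ) (D : (List ℕ × List ℕ) →₀ ℚ) (u v : List ℕ) :
    Finsupp.mapDomain (fun q : List ℕ × List ℕ => (q.1, i :: q.2)) D (u, k :: v) =
      if k = i then D (u, v) else 0 := by
  by_cases h : k = i
  · subst h
    rw [if_pos rfl]
    exact Finsupp.mapDomain_apply (fun p q h => by simpa [Prod.ext_iff] using h) D (u, v)
  · rw [if_neg h]
    exact Finsupp.mapDomain_notin_range _ _
      (by rintro ⟨q, hq⟩; simp [Prod.ext_iff] at hq; exact h hq.2.1.symm)

lemma mapL_nil (i : ℕ) (D : (List ℕ × List ℕ) →₀ ℚ) (v : List ℕ) :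
    Finsupp.mapDomain (fun q : List ℕ × List ℕ => (i :: q.1, q.2)) D ([], v) = 0 :=
  Finsupp.mapDomain_notin_range _ _ (by rintro ⟨q, h⟩; simp [Prod.ext_iff] at h)

lemma mapL_cons (i k : ℕ) (D : (List ℕ × List ℕ) →₀ ℚ) (u v : List ℕ) :
    Finsupp.mapDomain (fun q : List ℕ × List ℕ => (i :: q.1, q.2)) D (k :: u, v) =
      if k = i then D (u, v) else 0 := by
  by_cases h : k = i
  · subst h
    rw [if_pos rfl]
    exact Finsupp.mapDomain_apply (fun p q h => by simpa [Prod.ext_iff] using h) D (u, v)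
  · rw [if_neg h]
    exact Finsupp.mapDomain_notin_range _ _
      (by rintro ⟨q, hq⟩; simp [Prod.ext_iff] at hq; exact h hq.1.1.symm)

lemma mapB_nil_left (a b : ℕ) (D : (List ℕ × List ℕ) →₀ ℚ) (v : List ℕ) :
    Finsupp.mapDomain (fun q : List ℕ × List ℕ => (a :: q.1, b :: q.2)) D ([], v) = 0 :=
  Finsupp.mapDomain_notin_range _ _ (by rintro ⟨q, h⟩; simp [Prod.ext_iff] at h)

lemma mapB_nil_right (a b : ℕ) (D : (List ℕ × List ℕ) →₀ ℚ) (k : ℕ) (u : List ℕ) :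
    Finsupp.mapDomain (fun q : List ℕ × List ℕ => (a :: q.1, b :: q.2)) D (k :: u, []) = 0 :=
  Finsupp.mapDomain_notin_range _ _ (by rintro ⟨q, h⟩; simp [Prod.ext_iff] at h)

lemma mapB_cons (a b k l : ℕ) (D : (List ℕ × List ℕ) →₀ ℚ) (u v : List ℕ) :
    Finsupp.mapDomain (fun q : List ℕ × List ℕ => (a :: q.1, b :: q.2)) D (k :: u, l :: v) =
      if k = a ∧ l = b then D (u, v) else 0 := by
  by_cases h : k = a ∧ l = b
  · obtain ⟨rfl, rfl⟩ := h
    rw [if_pos ⟨rfl, rfl⟩]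
    exact Finsupp.mapDomain_apply (fun p q h => by simpa [Prod.ext_iff] using h) D (u, v)
  · rw [if_neg h]
    exact Finsupp.mapDomain_notin_range _ _
      (by rintro ⟨q, hq⟩; simp [Prod.ext_iff] at hq; exact h ⟨hq.1.1.symm, hq.2.1.symm⟩)

lemma mapW_apply_nil (i : ℕ) (D : List ℕ →₀ ℚ) :
    D.mapDomain (i :: ·) [] = 0 :=
  Finsupp.mapDomain_notin_range _ _ (by rintro ⟨q, h⟩; simp at h)

lemma mapW_apply_cons (i k : ℕ) (D : List ℕ →₀ ℚ) (w : List ℕ) :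
    D.mapDomain (i :: ·) (k :: w) = if k = i then D w else 0 := by
  by_cases h : k = i
  · subst h
    rw [if_pos rfl]
    exact Finsupp.mapDomain_apply (fun p q h => by simpa using h) D w
  · rw [if_neg h]
    exact Finsupp.mapDomain_notin_range _ _ (by rintro ⟨q, hq⟩; simp at hq; exact h hq.1.symm)

lemma deltab_nil_left : ∀ w v : List ℕ, deltab w ([], v) = if v = w then 1 else 0 := by
  intro w
  induction w with
  | nil => intro v; simp [deltab, Finsupp.single_apply, Prod.ext_iff, eq_comm]
  | cons k w' ih =>
    intro v
    rw [deltab_cons]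
    simp only [Finsupp.add_apply, Finset.sum_apply']
    match v with
    | [] => simp [mapR_nil, mapL_nil, mapB_nil_left]
    | m :: v' =>
      simp only [mapR_cons, mapL_nil, mapB_nil_left, Finset.sum_const_zero, add_zero, ih]
      by_cases h : m = k
      · subst h
        by_cases h2 : v' = w' <;> simp [h2]
      · simp [h]

lemma deltab_nil_right : ∀ w u : List ℕ, deltab w (u, []) = if u = w then 1 else 0 := by
  intro w
  induction w with
  | nil => intro u; simp [deltab, Finsupp.single_apply, Prod.ext_iff, eq_comm]
  | cons k w' ih =>
    intro u
    rw [deltab_cons]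
    simp only [Finsupp.add_apply, Finset.sum_apply']
    match u with
    | [] => simp [mapR_nil, mapL_nil, mapB_nil_left]
    | m :: u' =>
      simp only [mapR_nil, mapL_cons, mapB_nil_right, Finset.sum_const_zero, add_zero, zero_add, ih]
      by_cases h : m = k
      · subst h
        by_cases h2 : u' = w' <;> simp [h2]
      · simp [h]

lemma key : ∀ u v w : List ℕ, deltab w (u, v) = bqs u v w := by
  intro u v
  induction u, v using bqs.induct with
  | case1 v =>
    intro w
    rw [bqs, deltab_nil_left, Finsupp.single_apply]
  | case2 i u =>
    intro w
    rw [bqs, deltab_nil_right, Finsupp.single_apply]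
  | case3 i u j v IH1 IH2 IH3 =>
    intro w
    rw [bqs]
    match w with
    | [] =>
      have hd : deltab [] = Finsupp.single (([], []) : List ℕ × List ℕ) 1 := rfl
      simp [hd, Finsupp.single_apply, Finsupp.add_apply,
        apply_ite (fun f : List ℕ →₀ ℚ => f []), mapW_apply_nil]
    | k :: w' =>
      rw [deltab_cons]
      simp only [Finsupp.add_apply, Finset.sum_apply', mapR_cons, mapL_cons, mapB_cons,
        mapW_apply_cons, IH1, IH2, IH3]
      have hS : (∑ l ∈ Finset.Ico 1 k, if i = l ∧ j = k - l then bqs u v w' else 0)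
          = (if 1 ≤ i ∧ 1 ≤ j then (bqs u v).mapDomain ((i + j) :: ·) else 0) (k :: w') := by
        by_cases hij : 1 ≤ i ∧ 1 ≤ j
        · rw [if_pos hij, mapW_apply_cons]
          by_cases hk : k = i + j
          · subst hk
            rw [if_pos rfl, Finset.sum_eq_single i]
            · rw [if_pos ⟨rfl, by omega⟩]
            · intro l hl hli
              rw [if_neg]
              rintro ⟨rfl, -⟩
              exact hli rfl
            · intro h
              exact absurd (Finset.mem_Ico.mpr ⟨hij.1, by omega⟩) h
          · rw [if_neg hk, Finset.sum_eq_zero]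
            intro l hl
            rw [if_neg]
            simp only [Finset.mem_Ico] at hl
            rintro ⟨rfl, rfl⟩
            omega
        · rw [if_neg hij, Finsupp.coe_zero, Pi.zero_apply, Finset.sum_eq_zero]
          intro l hl
          rw [if_neg]
          simp only [Finset.mem_Ico] at hl
          rintro ⟨rfl, rfl⟩
          exact hij ⟨hl.1, by omega⟩
      rw [hS]
      congr 1
      have e1 : (if j = k then (bqs (i :: u) v) w' else 0)
          = if k = j then (bqs (i :: u) v) w' else 0 := by simp [eq_comm]
      have e2 : (if i = k then (bqs u (j :: v)) w' else 0)
          = if k = i then (bqs u (j :: v)) w' else 0 := by simp [eq_comm]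
      rw [e1, e2]
      exact add_comm _ _

/-- Duality: `(Δ_b(Φ) | u ⊗ v) = (Φ | u ∗_b v)` for a noncommutative polynomial `Φ` with
coefficients in a commutative `ℚ`-algebra `R` and all words `u, v`. -/
theorem stmt_11 (R : Type*) [CommRing R] [Algebra ℚ R] (Φ : List ℕ →₀ R)
    (u v : List ℕ) :
    (Φ.sum fun w c => (deltab w (u, v)) • c) =
      (bqs u v).sum fun w c => c • Φ w := by
  have h1 : (Φ.sum fun w c => (deltab w (u, v)) • c) =
      ∑ w ∈ Φ.support ∪ (bqs u v).support, (bqs u v w) • Φ w := by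
    rw [Finsupp.sum_of_support_subset _ Finset.subset_union_left _ (by intros; simp)]
    exact Finset.sum_congr rfl fun w _ => by rw [key u v w]
  have h2 : ((bqs u v).sum fun w c => c • Φ w) =
      ∑ w ∈ Φ.support ∪ (bqs u v).support, (bqs u v w) • Φ w :=
    Finsupp.sum_of_support_subset _ Finset.subset_union_right _ (by intros; simp)
  rw [h1, h2]
end

section
/- The antipode of the Hopf algebra (R⟪B⟫, conc, Δ_b) is the anti-automorphism S determined by S(b₀) = -b₀ and, for a ≥ 1, S(b_a) = ∑_{r=1}^{a} ∑_{j₁+⋯+j_r = a, j_i ≥ 1} (-1)^r b_{j₁} ⋯ b_{j_r}; equivalently, S as given satisfies the antipode identity ∑ S(w_{(1)}) w_{(2)} = ε(w)·1 on generators b_a. -/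
open Finset

/-- The finite set of block lists of compositions of `n`. -/
noncomputable def compBlocks (n : ℕ) : Finset (List ℕ) :=
  Finset.univ.image (Composition.blocks (n := n))

lemma mem_compBlocks {n : ℕ} {l : List ℕ} :
    l ∈ compBlocks n ↔ (∀ i ∈ l, 0 < i) ∧ l.sum = n := by
  simp only [compBlocks, Finset.mem_image, Finset.mem_univ, true_and]
  constructor
  · rintro ⟨c, rfl⟩
    exact ⟨fun i hi => c.blocks_pos hi, c.blocks_sum⟩
  · rintro ⟨h1, h2⟩
    exact ⟨⟨l, fun {i} hi => h1 i hi, h2⟩, rfl⟩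

lemma sum_compBlocks {M : Type*} [AddCommMonoid M] (n : ℕ) (f : List ℕ → M) :
    ∑ c : Composition n, f c.blocks = ∑ l ∈ compBlocks n, f l := by
  rw [compBlocks, Finset.sum_image]
  intro c _ d _ h
  exact Composition.ext h

lemma compBlocks_split (a : ℕ) (ha : a ≠ 0) :
    compBlocks a =
      insert [a] ((Finset.Ico 1 a).biUnion
        (fun j => (compBlocks j).image (fun w => w ++ [a - j]))) := by
  ext l
  simp only [mem_compBlocks, Finset.mem_insert, Finset.mem_biUnion, Finset.mem_Ico,
    Finset.mem_image]
  constructor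
  · rintro ⟨h1, h2⟩
    have hne : l ≠ [] := by
      intro h; rw [h] at h2; simp at h2; omega
    have hlast : l.getLast hne ∈ l := List.getLast_mem hne
    have hdl : l.dropLast ++ [l.getLast hne] = l := List.dropLast_append_getLast hne
    rcases eq_or_ne l.dropLast [] with hd | hd
    · left
      rw [← hdl, hd, List.nil_append]
      have : l.sum = l.getLast hne := by
        conv_lhs => rw [← hdl]
        simp [hd]
      rw [this] at h2
      rw [h2]
    · right
      refine ⟨l.dropLast.sum, ⟨?_, ?_⟩, l.dropLast, ⟨?_, rfl⟩, ?_⟩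
      · rcases List.exists_cons_of_ne_nil hd with ⟨x, t, hx⟩
        have hxl : x ∈ l := by
          rw [← hdl, hx]; simp
        have := h1 x hxl
        rw [hx]; simp only [List.sum_cons]; omega
      · have hgl : 0 < l.getLast hne := h1 _ hlast
        have : l.dropLast.sum + l.getLast hne = a := by
          conv_rhs => rw [← h2, ← hdl]
          simp
        omega
      · intro i hi
        exact h1 i (List.dropLast_subset _ hi)
      · have : l.dropLast.sum + l.getLast hne = a := by
          conv_rhs => rw [← h2, ← hdl]
          simp
        have : a - l.dropLast.sum = l.getLast hne := by omega
        rw [this, hdl]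
  · rintro (rfl | ⟨j, ⟨hj1, hj2⟩, m, ⟨hm1, hm2⟩, rfl⟩)
    · exact ⟨by intro i hi; simp at hi; omega, by simp⟩
    · refine ⟨?_, ?_⟩
      · intro i hi
        rcases List.mem_append.1 hi with h | h
        · exact hm1 i h
        · simp only [List.mem_singleton] at h; omega
      · simp [List.sum_append, hm2]; omega

set_option maxHeartbeats 1000000 in
lemma key_split {M : Type*} [AddCommMonoid M] (a : ℕ) (ha : a ≠ 0) (f : List ℕ → M) :
    ∑ l ∈ compBlocks a, f l =
      f [a] + ∑ j ∈ Finset.Ico 1 a, ∑ m ∈ compBlocks j, f (m ++ [a - j]) := by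
  have hnotmem : ([a] : List ℕ) ∉ (Finset.Ico 1 a).biUnion
      (fun j => (compBlocks j).image (fun w => w ++ [a - j])) := by
    simp only [Finset.mem_biUnion, Finset.mem_Ico, Finset.mem_image, not_exists]
    rintro j ⟨⟨hj1, hj2⟩, m, hm, hml⟩
    have hmne : m ≠ [] := by
      intro h
      rw [mem_compBlocks] at hm
      rw [h] at hm
      simp at hm; omega
    have : (m ++ [a - j]).length = ([a] : List ℕ).length := by rw [hml]
    simp only [List.length_append, List.length_singleton] at this
    have := List.length_pos_iff.2 hmne
    omega
  have hdisj : Set.PairwiseDisjoint ↑(Finset.Ico 1 a)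
      (fun j => (compBlocks j).image (fun w => w ++ [a - j])) := by
    intro j1 hj1 j2 hj2 hne
    simp only [Finset.coe_Ico, Set.mem_Ico] at hj1 hj2
    refine Finset.disjoint_left.2 fun l hl1 hl2 => ?_
    simp only [Finset.mem_image] at hl1 hl2
    obtain ⟨m1, _, h1⟩ := hl1
    obtain ⟨m2, _, h2⟩ := hl2
    rw [← h2] at h1
    have := (List.append_inj' h1 rfl).2
    simp only [List.cons.injEq] at this
    exact hne (by omega)
  rw [compBlocks_split a ha, Finset.sum_insert hnotmem, Finset.sum_biUnion hdisj]
  congr 1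
  refine Finset.sum_congr rfl fun j _ => ?_
  rw [Finset.sum_image]
  intro x _ y _ h
  exact (List.append_left_injective _ h)

/-- The antipode on the generator `b_a`: `S(b₀) = -b₀` and, for `a ≥ 1`,
`S(b_a) = ∑_{r=1}^a ∑_{j₁+⋯+j_r=a, j_i ≥ 1} (-1)^r b_{j₁}⋯b_{j_r}`
(the inner data is exactly a composition of `a`). -/
noncomputable def Sb (a : ℕ) : List ℕ →₀ ℚ :=
  if a = 0 then -Finsupp.single [0] 1
  else ∑ c : Composition a, ((-1 : ℚ)) ^ c.length • Finsupp.single c.blocks 1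

lemma Sb_eq (a : ℕ) (ha : a ≠ 0) :
    Sb a = ∑ l ∈ compBlocks a, ((-1 : ℚ)) ^ l.length • Finsupp.single l 1 := by
  rw [Sb, if_neg ha]
  exact sum_compBlocks a (fun l => ((-1 : ℚ)) ^ l.length • Finsupp.single l 1)

/-- `S` as above satisfies the antipode identity `conc ∘ (S ⊗ id) ∘ Δ_b (b_a) = ε(b_a)·1 = 0`
on every generator `b_a` (including `a = 0`): here
`Δ_b(b_a) = 1 ⊗ b_a + b_a ⊗ 1 + ∑_{j=1}^{a-1} b_j ⊗ b_{a-j}`, so the identity reads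
`b_a + S(b_a) + ∑_{j=1}^{a-1} S(b_j)·b_{a-j} = 0`, where `·` is concatenation. -/
theorem stmt_13 (a : ℕ) :
    Finsupp.single [a] (1 : ℚ) + Sb a +
      ∑ j ∈ Finset.Ico 1 a, (Sb j).mapDomain (fun w => w ++ [a - j]) = 0 := by
  rcases eq_or_ne a 0 with rfl | ha
  · simp [Sb]
  · rw [Sb_eq a ha, key_split a ha]
    have hmap : ∀ j ∈ Finset.Ico 1 a, (Sb j).mapDomain (fun w => w ++ [a - j]) =
        ∑ m ∈ compBlocks j, ((-1 : ℚ)) ^ m.length • Finsupp.single (m ++ [a - j]) 1 := by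
      intro j hj
      simp only [Finset.mem_Ico] at hj
      rw [Sb_eq j (by omega), Finsupp.mapDomain_finset_sum]
      refine Finset.sum_congr rfl fun m _ => ?_
      rw [Finsupp.mapDomain_smul, Finsupp.mapDomain_single]
    rw [Finset.sum_congr rfl hmap]
    have hA : ∀ j ∈ Finset.Ico 1 a,
        (∑ m ∈ compBlocks j, ((-1 : ℚ)) ^ (m ++ [a - j]).length • Finsupp.single (m ++ [a - j]) (1 : ℚ))
        = -∑ m ∈ compBlocks j, ((-1 : ℚ)) ^ m.length • Finsupp.single (m ++ [a - j]) (1 : ℚ) := by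
      intro j _
      rw [← Finset.sum_neg_distrib]
      refine Finset.sum_congr rfl fun m _ => ?_
      have : (m ++ [a - j]).length = m.length + 1 := by simp
      rw [this, pow_succ]
      simp [mul_smul]
    rw [Finset.sum_congr rfl hA, Finset.sum_neg_distrib]
    simp only [List.length_singleton, pow_one, neg_smul, one_smul]
    abel
end

section
/- The ℚ-linear map ℚ⟨B⟩ → ℚ⟨X⟩ sending b₀ ↦ x₀, b₁ ↦ x₁, and b_i ↦ 0 for i ≥ 2 (extended to words multiplicatively on letters, so a word maps to the corresponding word if all its letters are b₀ or b₁, and to 0 otherwise) is a surjective algebra morphism from (ℚ⟨B⟩, ∗_b) to (ℚ⟨X⟩, ⧢), where ⧢ is the shuffle product. -/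
/-- The shuffle product of two words (used on `ℚ⟨X⟩`, modeled by words with letters `≤ 1`,
identifying `x₀ = 0`, `x₁ = 1`). -/
noncomputable def sh : List ℕ → List ℕ → (List ℕ →₀ ℚ)
  | [], w => Finsupp.single w 1
  | u@(_ :: _), [] => Finsupp.single u 1
  | i :: u, j :: v =>
      (sh u (j :: v)).mapDomain (i :: ·) + (sh (i :: u) v).mapDomain (j :: ·)
  termination_by u v => u.length + v.length

/-- The bilinear extension of the shuffle product. -/
noncomputable def shL (f g : List ℕ →₀ ℚ) : List ℕ →₀ ℚ :=
  f.sum fun u a => g.sum fun v b => (a * b) • sh u v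

/-- The map `ℚ⟨B⟩ → ℚ⟨X⟩`: `b₀ ↦ x₀`, `b₁ ↦ x₁`, `b_i ↦ 0` for `i ≥ 2`, extended
letterwise to words. -/
noncomputable def phiX (w : List ℕ) : List ℕ →₀ ℚ :=
  if ∀ i ∈ w, i ≤ 1 then Finsupp.single w 1 else 0

noncomputable def Phi (f : List ℕ →₀ ℚ) : List ℕ →₀ ℚ := f.sum fun w a => a • phiX w

lemma fsum_zero {M : Type*} [AddCommMonoid M] (f : List ℕ →₀ ℚ) (h : List ℕ → ℚ → M)
    (H : ∀ w a, h w a = 0) : f.sum h = 0 :=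
  Finset.sum_eq_zero fun w _ => H w (f w)

lemma Phi_zero : Phi 0 = 0 := Finsupp.sum_zero_index

lemma Phi_add (f g : List ℕ →₀ ℚ) : Phi (f + g) = Phi f + Phi g :=
  Finsupp.sum_add_index' (by simp) (by intros; simp [add_smul])

lemma Phi_single (w : List ℕ) : Phi (Finsupp.single w 1) = phiX w := by
  simp [Phi, Finsupp.sum_single_index]

lemma phiX_nil : phiX [] = Finsupp.single [] 1 := by simp [phiX]

lemma phiX_cons (i : ℕ) (w : List ℕ) :
    phiX (i :: w) = if i ≤ 1 then (phiX w).mapDomain (i :: ·) else 0 := by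
  by_cases hi : i ≤ 1
  · rw [if_pos hi]
    unfold phiX
    by_cases hw : ∀ j ∈ w, j ≤ 1
    · rw [if_pos hw, if_pos (by simpa [List.forall_mem_cons] using And.intro hi hw),
        Finsupp.mapDomain_single]
    · rw [if_neg hw, if_neg (by simp only [List.forall_mem_cons]; tauto),
        Finsupp.mapDomain_zero]
  · unfold phiX
    rw [if_neg hi, if_neg fun h => hi (h i List.mem_cons_self)]

lemma Phi_mapDomain (i : ℕ) (f : List ℕ →₀ ℚ) :
    Phi (f.mapDomain (i :: ·)) = if i ≤ 1 then (Phi f).mapDomain (i :: ·) else 0 := by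
  unfold Phi
  rw [Finsupp.sum_mapDomain_index (by simp) (by intros; simp [add_smul])]
  by_cases hi : i ≤ 1
  · simp only [hi, if_true, Finsupp.mapDomain_sum]
    refine Finsupp.sum_congr fun w _ => ?_
    simp [phiX_cons, hi, Finsupp.mapDomain_smul]
  · simp only [hi, if_false]
    exact fsum_zero _ _ fun w a => by simp [phiX_cons, hi]

lemma shL_zero_left (g : List ℕ →₀ ℚ) : shL 0 g = 0 := Finsupp.sum_zero_index

lemma shL_zero_right (f : List ℕ →₀ ℚ) : shL f 0 = 0 :=
  fsum_zero _ _ fun u a => Finsupp.sum_zero_index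

lemma shL_single_single (u v : List ℕ) (a b : ℚ) :
    shL (Finsupp.single u a) (Finsupp.single v b) = (a * b) • sh u v := by
  unfold shL
  rw [Finsupp.sum_single_index, Finsupp.sum_single_index]
  · simp
  · exact fsum_zero _ _ fun v _ => by simp

lemma sh_nil_left (w : List ℕ) : sh [] w = Finsupp.single w 1 := by rw [sh]

lemma sh_nil_right (u : List ℕ) : sh u [] = Finsupp.single u 1 := by
  cases u <;> rw [sh]

lemma sh_cons_cons (i j : ℕ) (u v : List ℕ) :
    sh (i :: u) (j :: v) =
      (sh u (j :: v)).mapDomain (i :: ·) + (sh (i :: u) v).mapDomain (j :: ·) := by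
  rw [sh]

lemma phiX_pos {w : List ℕ} (h : ∀ i ∈ w, i ≤ 1) : phiX w = Finsupp.single w 1 := if_pos h

lemma phiX_neg {w : List ℕ} (h : ¬ ∀ i ∈ w, i ≤ 1) : phiX w = 0 := if_neg h

lemma shL_nil_left (g : List ℕ →₀ ℚ) : shL (Finsupp.single [] 1) g = g := by
  unfold shL
  refine (Finsupp.sum_single_index (h := fun u a => g.sum fun v b => (a * b) • sh u v)
    (fsum_zero _ _ fun v _ => by simp)).trans ?_
  conv_rhs => rw [← Finsupp.sum_single g]
  refine Finsupp.sum_congr fun v _ => ?_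
  simp [sh_nil_left, Finsupp.smul_single]

lemma shL_nil_right (g : List ℕ →₀ ℚ) : shL g (Finsupp.single [] 1) = g := by
  unfold shL
  conv_rhs => rw [← Finsupp.sum_single g]
  refine Finsupp.sum_congr fun u _ => ?_
  rw [Finsupp.sum_single_index (by simp)]
  simp [sh_nil_right, Finsupp.smul_single]

lemma shL_phiX_cons (i j : ℕ) (u v : List ℕ) :
    shL (phiX (i :: u)) (phiX (j :: v)) =
      (if i ≤ 1 then (shL (phiX u) (phiX (j :: v))).mapDomain (i :: ·) else 0) +
      (if j ≤ 1 then (shL (phiX (i :: u)) (phiX v)).mapDomain (j :: ·) else 0) := by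
  by_cases hu : ∀ k ∈ u, k ≤ 1
  case neg =>
    rw [phiX_neg (w := i :: u) (by simp only [List.forall_mem_cons]; tauto), phiX_neg hu]
    simp [shL_zero_left, Finsupp.mapDomain_zero]
  by_cases hv : ∀ k ∈ v, k ≤ 1
  case neg =>
    rw [phiX_neg (w := j :: v) (by simp only [List.forall_mem_cons]; tauto), phiX_neg hv]
    simp [shL_zero_right, Finsupp.mapDomain_zero]
  by_cases hi : i ≤ 1
  case neg =>
    rw [phiX_neg (w := i :: u) (by simp only [List.forall_mem_cons]; tauto)]
    simp [hi, shL_zero_left, Finsupp.mapDomain_zero]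
  by_cases hj : j ≤ 1
  case neg =>
    rw [phiX_neg (w := j :: v) (by simp only [List.forall_mem_cons]; tauto)]
    simp [hj, shL_zero_right, Finsupp.mapDomain_zero]
  rw [phiX_pos (List.forall_mem_cons.2 ⟨hi, hu⟩), phiX_pos (List.forall_mem_cons.2 ⟨hj, hv⟩),
    phiX_pos hu, phiX_pos hv, shL_single_single, shL_single_single, shL_single_single,
    sh_cons_cons]
  simp [hi, hj]

theorem Phi_bqs : ∀ u v : List ℕ, Phi (bqs u v) = shL (phiX u) (phiX v)
  | [], v => by
      rw [bqs, Phi_single, phiX_nil, shL_nil_left]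
  | (i :: u), [] => by
      rw [bqs, Phi_single, phiX_nil, shL_nil_right]
  | (i :: u), (j :: v) => by
      have ih1 := Phi_bqs u (j :: v)
      have ih2 := Phi_bqs (i :: u) v
      rw [bqs, Phi_add, Phi_add, Phi_mapDomain, Phi_mapDomain, ih1, ih2]
      have h3 : Phi (if 1 ≤ i ∧ 1 ≤ j then (bqs u v).mapDomain ((i + j) :: ·) else 0) = 0 := by
        split
        · rw [Phi_mapDomain]
          have h : ¬ (i + j ≤ 1) := by omega
          simp [h]
        · exact Phi_zero
      rw [h3, add_zero, shL_phiX_cons]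
  termination_by u v => u.length + v.length

/-- The map `b₀ ↦ x₀, b₁ ↦ x₁, b_i ↦ 0 (i ≥ 2)` is a surjective algebra morphism
`(ℚ⟨B⟩, ∗_b) → (ℚ⟨X⟩, ⧢)`. -/
theorem stmt_14 :
    (∀ u v : List ℕ, ((bqs u v).sum fun w a => a • phiX w) = shL (phiX u) (phiX v)) ∧
    (∀ g : List ℕ →₀ ℚ, (∀ w ∈ g.support, ∀ i ∈ w, i ≤ 1) →
      ∃ f : List ℕ →₀ ℚ, (f.sum fun w a => a • phiX w) = g) := by
  constructor
  · exact Phi_bqs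
  · intro g hg
    refine ⟨g, ?_⟩
    have h : (g.sum fun w a => a • phiX w) = g.sum fun w a => Finsupp.single w a := by
      refine Finsupp.sum_congr fun w hw => ?_
      rw [phiX, if_pos (hg w hw), Finsupp.smul_single, smul_eq_mul, mul_one]
    rw [h, Finsupp.sum_single]
end

section
/- The ℚ-linear map ℚ⟨B⟩ → ℚ⟨Y⟩ sending b₀ ↦ 0 and b_i ↦ y_i for i ≥ 1 (extended letterwise on words: a word maps to the corresponding word in the y's if it contains no b₀, and to 0 otherwise) is a surjective algebra morphism from (ℚ⟨B⟩, ∗_b) to (ℚ⟨Y⟩, ∗), where ∗ is the stuffle product. -/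
/-- The stuffle product of two words (used on `ℚ⟨Y⟩`, modeled by words with letters `≥ 1`,
identifying `y_i` with the letter `i`). -/
noncomputable def st : List ℕ → List ℕ → (List ℕ →₀ ℚ)
  | [], w => Finsupp.single w 1
  | u@(_ :: _), [] => Finsupp.single u 1
  | i :: u, j :: v =>
      (st u (j :: v)).mapDomain (i :: ·) + (st (i :: u) v).mapDomain (j :: ·) +
        (st u v).mapDomain ((i + j) :: ·)
  termination_by u v => u.length + v.length

/-- The bilinear extension of the stuffle product. -/
noncomputable def stL (f g : List ℕ →₀ ℚ) : List ℕ →₀ ℚ :=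
  f.sum fun u a => g.sum fun v b => (a * b) • st u v

/-- The map `ℚ⟨B⟩ → ℚ⟨Y⟩`: `b₀ ↦ 0`, `b_i ↦ y_i` for `i ≥ 1`, extended letterwise. -/
noncomputable def phiY (w : List ℕ) : List ℕ →₀ ℚ :=
  if 0 ∉ w then Finsupp.single w 1 else 0

lemma bqs_eq_st : ∀ u v : List ℕ, 0 ∉ u → 0 ∉ v → bqs u v = st u v
  | [], w, _, _ => by simp [bqs, st]
  | (i :: u), [], _, _ => by simp [bqs, st]
  | (i :: u), (j :: v), hu, hv => by
    have hi : 1 ≤ i := Nat.one_le_iff_ne_zero.mpr (fun h => hu (by simp [h]))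
    have hj : 1 ≤ j := Nat.one_le_iff_ne_zero.mpr (fun h => hv (by simp [h]))
    have hu' : (0:ℕ) ∉ u := fun h => hu (List.mem_cons_of_mem _ h)
    have hv' : (0:ℕ) ∉ v := fun h => hv (List.mem_cons_of_mem _ h)
    rw [bqs, st, bqs_eq_st u (j::v) hu' hv, bqs_eq_st (i::u) v hu hv',
      bqs_eq_st u v hu' hv', if_pos ⟨hi, hj⟩]
  termination_by u v => u.length + v.length

lemma mem_mapDomain_cons {i : ℕ} {f : List ℕ →₀ ℚ} {w : List ℕ}
    (h : w ∈ (f.mapDomain (i :: ·)).support) : ∃ w' ∈ f.support, w = i :: w' := by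
  have := Finsupp.mapDomain_support h
  simp only [Finset.mem_image] at this
  obtain ⟨w', hw', rfl⟩ := this
  exact ⟨w', hw', rfl⟩

lemma zero_mem_bqs : ∀ u v : List ℕ, (0 ∈ u ∨ 0 ∈ v) →
    ∀ w ∈ (bqs u v).support, (0:ℕ) ∈ w
  | [], v, h, w, hw => by
    rw [bqs] at hw
    simp only [Finsupp.support_single_ne_zero _ (one_ne_zero), Finset.mem_singleton] at hw
    subst hw; simpa using h
  | (i :: u), [], h, w, hw => by
    rw [bqs] at hw
    simp only [Finsupp.support_single_ne_zero _ (one_ne_zero), Finset.mem_singleton] at hw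
    subst hw; simpa using h
  | (i :: u), (j :: v), h, w, hw => by
    rw [bqs] at hw
    have := Finsupp.support_add hw
    rw [Finset.mem_union] at this
    rcases this with h1 | h1
    · have := Finsupp.support_add h1
      rw [Finset.mem_union] at this
      rcases this with h2 | h2
      · obtain ⟨w', hw', rfl⟩ := mem_mapDomain_cons h2
        rcases Nat.eq_zero_or_pos i with hi | hi
        · simp [hi]
        · have : (0:ℕ) ∈ u ∨ (0:ℕ) ∈ (j :: v) := by
            rcases h with h | h
            · left; rcases List.mem_cons.1 h with h | h
              · omega
              · exact h
            · right; exact h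
          exact List.mem_cons_of_mem _ (zero_mem_bqs u (j::v) this w' hw')
      · obtain ⟨w', hw', rfl⟩ := mem_mapDomain_cons h2
        rcases Nat.eq_zero_or_pos j with hj | hj
        · simp [hj]
        · have : (0:ℕ) ∈ (i :: u) ∨ (0:ℕ) ∈ v := by
            rcases h with h | h
            · left; exact h
            · right; rcases List.mem_cons.1 h with h | h
              · omega
              · exact h
          exact List.mem_cons_of_mem _ (zero_mem_bqs (i::u) v this w' hw')
    · split_ifs at h1 with hc
      · obtain ⟨w', hw', rfl⟩ := mem_mapDomain_cons h1
        have : (0:ℕ) ∈ u ∨ (0:ℕ) ∈ v := by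
          rcases h with h | h
          · left; rcases List.mem_cons.1 h with h | h
            · omega
            · exact h
          · right; rcases List.mem_cons.1 h with h | h
            · omega
            · exact h
        exact List.mem_cons_of_mem _ (zero_mem_bqs u v this w' hw')
      · simp at h1
  termination_by u v => u.length + v.length

lemma zero_not_mem_st : ∀ u v : List ℕ, 0 ∉ u → 0 ∉ v →
    ∀ w ∈ (st u v).support, (0:ℕ) ∉ w
  | [], v, _, hv, w, hw => by
    rw [st] at hw
    simp only [Finsupp.support_single_ne_zero _ (one_ne_zero), Finset.mem_singleton] at hw
    subst hw; exact hv
  | (i :: u), [], hu, _, w, hw => by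
    rw [st] at hw
    simp only [Finsupp.support_single_ne_zero _ (one_ne_zero), Finset.mem_singleton] at hw
    subst hw; exact hu
  | (i :: u), (j :: v), hu, hv, w, hw => by
    have hi : i ≠ 0 := fun h => hu (by simp [h])
    have hj : j ≠ 0 := fun h => hv (by simp [h])
    have hu' : (0:ℕ) ∉ u := fun h => hu (List.mem_cons_of_mem _ h)
    have hv' : (0:ℕ) ∉ v := fun h => hv (List.mem_cons_of_mem _ h)
    rw [st] at hw
    have := Finsupp.support_add hw
    rw [Finset.mem_union] at this
    rcases this with h1 | h1
    · have := Finsupp.support_add h1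
      rw [Finset.mem_union] at this
      rcases this with h2 | h2
      · obtain ⟨w', hw', rfl⟩ := mem_mapDomain_cons h2
        have := zero_not_mem_st u (j::v) hu' hv w' hw'
        simp [List.mem_cons]; exact ⟨fun h => hi h.symm, this⟩
      · obtain ⟨w', hw', rfl⟩ := mem_mapDomain_cons h2
        have := zero_not_mem_st (i::u) v hu hv' w' hw'
        simp [List.mem_cons]; exact ⟨fun h => hj h.symm, this⟩
    · obtain ⟨w', hw', rfl⟩ := mem_mapDomain_cons h1
      have := zero_not_mem_st u v hu' hv' w' hw'
      simp [List.mem_cons]; exact ⟨by omega, this⟩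
  termination_by u v => u.length + v.length

lemma sum_phiY_of_zero_free (g : List ℕ →₀ ℚ) (hg : ∀ w ∈ g.support, (0:ℕ) ∉ w) :
    (g.sum fun w a => a • phiY w) = g := by
  have : (g.sum fun w a => a • phiY w) = g.sum fun w a => Finsupp.single w a := by
    apply Finsupp.sum_congr
    intro w hw
    rw [phiY, if_pos (hg w hw), Finsupp.smul_single', mul_one]
  rw [this, Finsupp.sum_single]

/-- The map `b₀ ↦ 0, b_i ↦ y_i (i ≥ 1)` is a surjective algebra morphism
`(ℚ⟨B⟩, ∗_b) → (ℚ⟨Y⟩, ∗)`. -/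
theorem stmt_15 :
    (∀ u v : List ℕ, ((bqs u v).sum fun w a => a • phiY w) = stL (phiY u) (phiY v)) ∧
    (∀ g : List ℕ →₀ ℚ, (∀ w ∈ g.support, (0 : ℕ) ∉ w) →
      ∃ f : List ℕ →₀ ℚ, (f.sum fun w a => a • phiY w) = g) := by
  constructor
  · intro u v
    by_cases h : (0:ℕ) ∈ u ∨ (0:ℕ) ∈ v
    · have hL : ((bqs u v).sum fun w a => a • phiY w) = 0 := by
        rw [Finsupp.sum]
        apply Finset.sum_eq_zero
        intro w hw
        rw [phiY, if_neg (by simpa using zero_mem_bqs u v h w hw), smul_zero]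
      rw [hL]
      rcases h with h | h
      · rw [phiY, if_neg (by simpa using h)]
        simp [stL]
      · rw [show phiY v = 0 by rw [phiY, if_neg (by simpa using h)]]
        simp [stL]
    · push_neg at h
      obtain ⟨hu, hv⟩ := h
      rw [bqs_eq_st u v hu hv, phiY, if_pos hu, phiY, if_pos hv]
      have hR : stL (Finsupp.single u 1) (Finsupp.single v 1) = st u v := by
        rw [stL, Finsupp.sum_single_index (by simp), Finsupp.sum_single_index (by simp)]
        simp
      rw [hR]
      exact sum_phiY_of_zero_free _ (zero_not_mem_st u v hu hv)
  · intro g hg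
    exact ⟨g, sum_phiY_of_zero_free g hg⟩
end

section
/- The map sending y_i ↦ b_i (i ≥ 1), extended to an injection of words, identifies (ℚ⟨Y⟩, ∗, Δ_dec) with the sub-bialgebra of (ℚ⟨B⟩, ∗_b, Δ_dec) spanned by all words not containing the letter b₀; in particular this span is closed under ∗_b and Δ_dec, and the map is an injective algebra morphism for the respective quasi-shuffle products. -/
lemma supp_mapDomain_cons (i : ℕ) (f : List ℕ →₀ ℚ)
    (hf : ∀ w ∈ f.support, (0:ℕ) ∉ w) (hi : i ≠ 0) :
    ∀ w ∈ (f.mapDomain (i :: ·)).support, (0:ℕ) ∉ w := by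
  intro w hw
  have := Finsupp.mapDomain_support hw
  simp only [Finset.mem_image] at this
  obtain ⟨x, hx, rfl⟩ := this
  simp [hi.symm, hf x hx]

lemma bqs_main : ∀ u v : List ℕ, (0:ℕ) ∉ u → (0:ℕ) ∉ v →
    bqs u v = st u v ∧ ∀ w ∈ (bqs u v).support, (0:ℕ) ∉ w
  | [], w, _, hw => by
    refine ⟨by rw [bqs, st], ?_⟩
    rw [bqs]
    intro x hx
    have : x = w := by simpa using Finsupp.support_single_subset hx
    subst this; exact hw
  | (a :: u), [], hu, _ => by
    refine ⟨by rw [bqs, st], ?_⟩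
    rw [bqs]
    intro x hx
    have : x = a :: u := by simpa using Finsupp.support_single_subset hx
    subst this; exact hu
  | (i :: u), (j :: v), hu, hv => by
    have hi : i ≠ 0 := fun h => hu (h ▸ (List.mem_cons_self : i ∈ i :: u))
    have hj : j ≠ 0 := fun h => hv (h ▸ (List.mem_cons_self : j ∈ j :: v))
    have hu' : (0:ℕ) ∉ u := fun h => hu (List.mem_cons_of_mem _ h)
    have hv' : (0:ℕ) ∉ v := fun h => hv (List.mem_cons_of_mem _ h)
    obtain ⟨e1, s1⟩ := bqs_main u (j :: v) hu' hv
    obtain ⟨e2, s2⟩ := bqs_main (i :: u) v hu hv'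
    obtain ⟨e3, s3⟩ := bqs_main u v hu' hv'
    have hcond : 1 ≤ i ∧ 1 ≤ j :=
      ⟨Nat.one_le_iff_ne_zero.2 hi, Nat.one_le_iff_ne_zero.2 hj⟩
    constructor
    · rw [bqs, st, if_pos hcond, e1, e2, e3]
    · rw [bqs, if_pos hcond]
      intro w hw
      rcases Finset.mem_union.1 (Finsupp.support_add hw) with h | h
      · rcases Finset.mem_union.1 (Finsupp.support_add h) with h' | h'
        · exact supp_mapDomain_cons i _ s1 hi w h'
        · exact supp_mapDomain_cons j _ s2 hj w h'
      · exact supp_mapDomain_cons (i + j) _ s3 (by omega) w h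
  termination_by u v => u.length + v.length

/-- `(ℚ⟨Y⟩, ∗, Δ_dec)` embeds via `y_i ↦ b_i` as the sub-bialgebra of
`(ℚ⟨B⟩, ∗_b, Δ_dec)` spanned by words not containing `b₀`:  the induced linear map is
injective, on `b₀`-free words `∗_b` agrees with the stuffle product and produces only
`b₀`-free words, and deconcatenation of a `b₀`-free word involves only `b₀`-free words. -/
theorem stmt_16 :
    Function.Injective
      (Finsupp.mapDomain (Subtype.val : {w : List ℕ // (0 : ℕ) ∉ w} → List ℕ) :
        ({w : List ℕ // (0 : ℕ) ∉ w} →₀ ℚ) → (List ℕ →₀ ℚ)) ∧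
    (∀ u v : List ℕ, (0 : ℕ) ∉ u → (0 : ℕ) ∉ v →
      bqs u v = st u v ∧ ∀ w ∈ (bqs u v).support, (0 : ℕ) ∉ w) ∧
    (∀ w : List ℕ, (0 : ℕ) ∉ w → ∀ i : ℕ,
      (0 : ℕ) ∉ w.take i ∧ (0 : ℕ) ∉ w.drop i) := by
  refine ⟨Finsupp.mapDomain_injective Subtype.val_injective, bqs_main, ?_⟩
  intro w hw i
  exact ⟨fun h => hw (List.mem_of_mem_take h), fun h => hw (List.mem_of_mem_drop h)⟩
end

section
/- Let Π₀ : ℚ⟨B⟩ → ℚ⟨B⟩⁰ be the projection which is the identity on words not starting with b₀ and sends words starting with b₀ to 0, let θ_X^anti : ℚ⟨X⟩ → ℚ⟨B⟩ be the word-reversing map x_{ε₁}⋯x_{ε_n} ↦ b_{ε_n}⋯b_{ε₁}, let θ_Y : ℚ⟨Y⟩ → ℚ⟨B⟩ send y_{k₁}⋯y_{k_d} ↦ b_{k₁}⋯b_{k_d}, and let Π_Y : ℚ⟨X⟩ → ℚ⟨Y⟩ send words ending in x₀ to 0 and x₀^{k₁-1}x₁⋯x₀^{k_d-1}x₁ ↦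 y_{k₁}⋯y_{k_d}. Then τ ∘ Π₀ ∘ θ_X^anti = θ_Y ∘ Π_Y. -/
/-- Decompose a word (assumed not to start with `b₀`) into pairs `(k_i, m_i)` with
`w = b_{k₁} b₀^{m₁} ⋯ b_{k_d} b₀^{m_d}`. -/
def decomp : List ℕ → List (ℕ × ℕ)
  | [] => []
  | k :: t => (k, (t.takeWhile (· = 0)).length) :: decomp (t.dropWhile (· = 0))
  termination_by w => w.length
  decreasing_by
    exact Nat.lt_succ_of_le (List.Sublist.length_le (List.dropWhile_sublist _))

/-- The word `b_{k₁} b₀^{m₁} ⋯ b_{k_d} b₀^{m_d}` built from its index pairs. -/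
def buildWord (l : List (ℕ × ℕ)) : List ℕ :=
  (l.map fun p => p.1 :: List.replicate p.2 0).flatten

/-- `τ` on index pairs. -/
def tauIdx (l : List (ℕ × ℕ)) : List (ℕ × ℕ) :=
  l.reverse.map fun p => (p.2 + 1, p.1 - 1)

/-- The involution `τ` as a map on words not starting with `b₀`. -/
def tauWord (w : List ℕ) : List ℕ := buildWord (tauIdx (decomp w))

/-- Read off the `Y`-word of an `X`-word `x₀^{k₁-1}x₁ ⋯ x₀^{k_d-1}x₁` (letters `0,1`,
not ending in `x₀`): the result is `[k₁, …, k_d]`.  The auxiliary counter records the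
number of `x₀`'s seen since the last `x₁`. -/
def yOfAux : List ℕ → ℕ → List ℕ
  | [], _ => []
  | 0 :: t, c => yOfAux t (c + 1)
  | _ :: t, c => (c + 1) :: yOfAux t 0

/-- `Π_Y`-image word of an `X`-word. -/
def yOf (w : List ℕ) : List ℕ := yOfAux w 0

/-- A word of shape `x₀^{a₁} x₁ ⋯ x₀^{a_d} x₁`. -/
def xWord (as : List ℕ) : List ℕ :=
  (as.map fun a => List.replicate a 0 ++ [1]).flatten

lemma yOfAux_xWord (as : List ℕ) (a c : ℕ) :
    yOfAux (List.replicate a 0 ++ 1 :: xWord as) c = (c + a + 1) :: yOf (xWord as) := by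
  induction a generalizing c with
  | zero => simp [yOfAux, yOf]
  | succ a ih =>
      rw [List.replicate_succ]
      simpa [yOfAux, Nat.add_assoc, Nat.add_comm 1 a] using ih (c + 1)

lemma yOf_xWord (as : List ℕ) : yOf (xWord as) = as.map (· + 1) := by
  induction as with
  | nil => simp [yOf, yOfAux, xWord]
  | cons a t ih =>
      have : xWord (a :: t) = List.replicate a 0 ++ 1 :: xWord t := by
        simp [xWord]
      rw [this]
      unfold yOf
      rw [yOfAux_xWord]
      simp [ih]

/-- Reverse-shaped word: `x₁ x₀^{a₁} ⋯ x₁ x₀^{a_d}`. -/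
def rWord (bs : List ℕ) : List ℕ :=
  (bs.map fun a => 1 :: List.replicate a 0).flatten

lemma rWord_head (bs : List ℕ) : rWord bs = [] ∨ (rWord bs).head? = some 1 := by
  cases bs with
  | nil => left; rfl
  | cons b t => right; simp [rWord]

lemma decomp_rWord (bs : List ℕ) : decomp (rWord bs) = bs.map fun a => (1, a) := by
  induction bs with
  | nil => simp [rWord, decomp]
  | cons b t ih =>
      have h : rWord (b :: t) = 1 :: (List.replicate b 0 ++ rWord t) := by
        simp [rWord]
      rw [h, decomp]
      have htw : (List.replicate b 0 ++ rWord t).takeWhile (· = 0) = List.replicate b 0 := by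
        rw [List.takeWhile_append_of_pos (by simp)]
        rcases rWord_head t with h0 | h0
        · simp [h0]
        · cases t' : rWord t with
          | nil => simp
          | cons x xs =>
              rw [t'] at h0
              simp at h0
              simp [List.takeWhile, h0]
      have hdw : (List.replicate b 0 ++ rWord t).dropWhile (· = 0) = rWord t := by
        have := List.takeWhile_append_dropWhile (l := List.replicate b 0 ++ rWord t)
          (p := fun x => decide (x = 0))
        rw [htw] at this
        exact (List.append_cancel_left this)
      rw [htw, hdw, ih]
      simp

lemma xWord_reverse (as : List ℕ) : (xWord as).reverse = rWord as.reverse := by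
  induction as with
  | nil => rfl
  | cons a t ih =>
      have h : xWord (a :: t) = (List.replicate a 0 ++ [1]) ++ xWord t := by
        simp [xWord]
      rw [h, List.reverse_append, ih]
      simp [rWord]

lemma tauWord_rWord (bs : List ℕ) :
    tauWord (rWord bs) = bs.reverse.map (· + 1) := by
  rw [tauWord, decomp_rWord, tauIdx]
  rw [← List.map_reverse, List.map_map]
  simp only [buildWord, List.map_map]
  induction bs.reverse with
  | nil => rfl
  | cons b t ih => simpa [Function.comp] using ih

/-- Every `{0,1}`-word not ending in `0` has shape `xWord as`. -/
lemma exists_xWord (w : List ℕ) (hw : ∀ i ∈ w, i ≤ 1) (hl : w.getLast? ≠ some 0) :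
    ∃ as, w = xWord as := by
  induction w with
  | nil => exact ⟨[], rfl⟩
  | cons i t ih =>
      have ht : ∀ j ∈ t, j ≤ 1 := fun j hj => hw j (List.mem_cons_of_mem _ hj)
      have hi : i ≤ 1 := hw i List.mem_cons_self
      interval_cases i
      · -- i = 0: t must be nonempty
        cases t with
        | nil => simp at hl
        | cons j s =>
            have hl' : (j :: s).getLast? ≠ some 0 := by
              rwa [List.getLast?_cons_cons] at hl
            obtain ⟨as, has⟩ := ih ht hl'
            cases as with
            | nil => simp [xWord] at has
            | cons a r =>
                refine ⟨(a + 1) :: r, ?_⟩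
                simp [xWord] at has ⊢
                rw [List.replicate_succ]
                simp [has]
      · -- i = 1
        cases t with
        | nil => exact ⟨[0], rfl⟩
        | cons j s =>
            have hl' : (j :: s).getLast? ≠ some 0 := by
              rwa [List.getLast?_cons_cons] at hl
            obtain ⟨as, has⟩ := ih ht hl'
            refine ⟨0 :: as, ?_⟩
            simp [xWord] at has ⊢
            exact has

/-- `τ ∘ Π₀ ∘ θ_X^anti = θ_Y ∘ Π_Y` on `ℚ⟨X⟩` (stated on the word basis; words over
`X = {x₀,x₁}` are words with letters `≤ 1`, `θ_X^anti` is word reversal, `Π₀` kills words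
starting with `b₀`, `Π_Y` kills words ending in `x₀`, `θ_Y` identifies `y_k` with `b_k`). -/
theorem stmt_18 (w : List ℕ) (hw : ∀ i ∈ w, i ≤ 1) :
    (if w.reverse.head? = some 0 then (0 : List ℕ →₀ ℚ)
      else Finsupp.single (tauWord w.reverse) 1) =
    (if w.getLast? = some 0 then (0 : List ℕ →₀ ℚ)
      else Finsupp.single (yOf w) 1) := by
  rw [List.head?_reverse]
  by_cases h : w.getLast? = some 0
  · simp [h]
  · rw [if_neg h, if_neg h]
    obtain ⟨as, rfl⟩ := exists_xWord w hw h
    rw [xWord_reverse, tauWord_rWord, yOf_xWord, List.reverse_reverse]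
end
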